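/- Let q ≥ 5 be an odd prime power, P_1 = {(1,x,y) : x,y ∈ F_q*} ⊆ PG(2,q), and C_1 the set of conics through e_1,e_2,e_3. For any point P ∈ P_1 and conic C ∈ C_1 with P ∉ C, the number of points of C ∩ P_1 joined to P (i.e., points Q of C ∩ P_1 such that no three of e_1,e_2,e_3,P,Q are collinear) is q-5, q-4, or q-3. -/

import Mathlib

open Matrix

/-- The five points e₁,e₂,e₃,(1,P₁,P₂),(1,Q₁,Q₂) of PG(2,q). -/
def fivePts (F : Type) [Field F] (P Q : F × F) : Fin 5 → Fin 3 → F :=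
  ![![1,0,0], ![0,1,0], ![0,0,1], ![1,P.1,P.2], ![1,Q.1,Q.2]]

/-- P and Q are joined: distinct and no three of e₁,e₂,e₃,P,Q are collinear. -/
abbrev joinedPts (F : Type) [Field F] (P Q : F × F) : Prop :=
  P ≠ Q ∧ ∀ i j k : Fin 5, i ≠ j → i ≠ k → j ≠ k →
    (Matrix.of ![fivePts F P Q i, fivePts F P Q j, fivePts F P Q k]).det ≠ 0

/-- (1,x,y) lies on the conic through e₁,e₂,e₃ with matrix !![0,a,b;a,0,1;b,1,0]. -/
abbrev onConic (F : Type) [Field F] (a b : F) (P : F × F) : Prop :=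
  ![1, P.1, P.2] ⬝ᵥ (!![0, a, b; a, 0, 1; b, 1, 0] *ᵥ ![1, P.1, P.2]) = 0

lemma onConic_iff' {F : Type} [Field F] (h2 : (2:F) ≠ 0) (a b : F) (Q : F × F) :
    onConic F a b Q ↔ a * Q.1 + b * Q.2 + Q.1 * Q.2 = 0 := by
  have h : ![1, Q.1, Q.2] ⬝ᵥ (!![0, a, b; a, 0, 1; b, 1, 0] *ᵥ ![1, Q.1, Q.2])
      = 2 * (a * Q.1 + b * Q.2 + Q.1 * Q.2) := by
    simp [dotProduct, mulVec, Fin.sum_univ_three]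
    ring
  rw [onConic, h, mul_eq_zero]
  simp [h2]

set_option maxHeartbeats 2000000 in
lemma joined_iff' {F : Type} [Field F] (P Q : F × F) (hP1 : P.1 ≠ 0) (hP2 : P.2 ≠ 0)
    (hQ1 : Q.1 ≠ 0) (hQ2 : Q.2 ≠ 0) :
    joinedPts F P Q ↔ (Q.1 ≠ P.1 ∧ Q.2 ≠ P.2 ∧ P.1 * Q.2 ≠ P.2 * Q.1) := by
  constructor
  · rintro ⟨-, h⟩
    refine ⟨?_, ?_, ?_⟩
    · have := h 2 3 4 (by decide) (by decide) (by decide)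
      simp [fivePts, Matrix.det_fin_three, Matrix.vecHead, Matrix.vecTail] at this
      intro he; exact this (by rw [he]; ring)
    · have := h 1 3 4 (by decide) (by decide) (by decide)
      simp [fivePts, Matrix.det_fin_three, Matrix.vecHead, Matrix.vecTail] at this
      intro he; exact this (by rw [he]; ring)
    · have := h 0 3 4 (by decide) (by decide) (by decide)
      simp [fivePts, Matrix.det_fin_three, Matrix.vecHead, Matrix.vecTail] at this
      intro he; exact this (by rw [he]; ring)
  · rintro ⟨h1, h2, h3⟩
    refine ⟨fun h => h1 (by rw [h]), ?_⟩
    intro i j k hij hik hjk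
    fin_cases i <;> fin_cases j <;> fin_cases k <;>
      first
        | exact absurd rfl hij
        | exact absurd rfl hik
        | exact absurd rfl hjk
        | (simp [fivePts, Matrix.det_fin_three, Matrix.vecHead, Matrix.vecTail, sub_eq_zero]
           <;> (intro he; first
            | exact h3 (by linear_combination he)
            | exact h3 (by linear_combination -he)
            | exact h1 (by linear_combination he)
            | exact h1 (by linear_combination -he)
            | exact h2 (by linear_combination he)
            | exact h2 (by linear_combination -he)
            | exact hP1 (by linear_combination he)
            | exact hP1 (by linear_combination -he)
            | exact hP2 (by linear_combination he)
            | exact hP2 (by linear_combination -he)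
            | exact hQ1 (by linear_combination he)
            | exact hQ1 (by linear_combination -he)
            | exact hQ2 (by linear_combination he)
            | exact hQ2 (by linear_combination -he)))


theorem stmt_3 (F : Type) [Field F] [Fintype F] [DecidableEq F] (q : ℕ)
    (hq : Fintype.card F = q) (hodd : Odd q) (hq5 : 5 ≤ q)
    (a b : F) (ha : a ≠ 0) (hb : b ≠ 0)
    (P : F × F) (hP1 : P.1 ≠ 0) (hP2 : P.2 ≠ 0) (hPC : ¬ onConic F a b P) :
    (Finset.univ.filter (fun Q : F × F => Q.1 ≠ 0 ∧ Q.2 ≠ 0 ∧ onConic F a b Q ∧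
      joinedPts F P Q)).card ∈ ({q - 5, q - 4, q - 3} : Set ℕ) := by
  classical
  have h2 : (2:F) ≠ 0 := by
    intro h2
    have hd : ringChar F ∣ 2 := (CharP.cast_eq_zero_iff F (ringChar F) 2).mp (by exact_mod_cast h2)
    have hp : (ringChar F).Prime := CharP.char_is_prime F (ringChar F)
    have h := FiniteField.even_card_of_char_two
      ((Nat.prime_dvd_prime_iff_eq hp Nat.prime_two).mp hd)
    rw [hq, Nat.odd_iff] at *
    omega
  set y : F → F := fun x => -a * x / (x + b) with hy
  set p : F → Prop :=
    fun x => x ≠ 0 ∧ x ≠ -b ∧ x ≠ P.1 ∧ y x ≠ P.2 ∧ P.1 * y x ≠ P.2 * x with hp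
  set X : Finset F := Finset.univ.filter p with hXdef
  -- membership characterization
  have hmem : ∀ Q : F × F, (Q.1 ≠ 0 ∧ Q.2 ≠ 0 ∧ onConic F a b Q ∧ joinedPts F P Q) ↔
      (Q.1 ∈ X ∧ Q.2 = y Q.1) := by
    intro Q
    constructor
    · rintro ⟨hQ1, hQ2, hC, hJ⟩
      rw [onConic_iff' h2] at hC
      rw [joined_iff' P Q hP1 hP2 hQ1 hQ2] at hJ
      obtain ⟨hj1, hj2, hj3⟩ := hJ
      have hxb : Q.1 + b ≠ 0 := by
        intro h
        apply ha
        have hb' : b = -Q.1 := by linear_combination h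
        have : a * Q.1 = 0 := by rw [hb'] at hC; linear_combination hC
        exact (mul_eq_zero.mp this).resolve_right hQ1
      have hQ2y : Q.2 = y Q.1 := by
        rw [hy]; field_simp; first | linear_combination -hC | linear_combination hC | linear_combination 2 * hC | linear_combination -2 * hC
      refine ⟨Finset.mem_filter.mpr ⟨Finset.mem_univ _, hQ1, ?_, hj1, ?_, ?_⟩, hQ2y⟩
      · intro h; exact hxb (by rw [h]; ring)
      · rw [← hQ2y]; exact hj2
      · rw [← hQ2y]; exact hj3
    · rintro ⟨hx, hQ2y⟩
      obtain ⟨-, hx0, hxb', hxP, hyP, hslope⟩ := Finset.mem_filter.mp hx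
      have hxb : Q.1 + b ≠ 0 := by
        intro h; exact hxb' (by linear_combination h)
      have hy0 : y Q.1 ≠ 0 := by
        rw [hy]
        exact div_ne_zero (by simpa [neg_eq_zero] using mul_ne_zero ha hx0) hxb
      have hQ2 : Q.2 ≠ 0 := hQ2y ▸ hy0
      have hC : onConic F a b Q := by
        rw [onConic_iff' h2, hQ2y, hy]
        field_simp
        ring
      refine ⟨hx0, hQ2, hC, (joined_iff' P Q hP1 hP2 hx0 hQ2).mpr ⟨hxP, ?_, ?_⟩⟩
      · rw [hQ2y]; exact hyP
      · rw [hQ2y]; exact hslope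
  -- the filtered set is the image of X
  have himg : (Finset.univ.filter (fun Q : F × F => Q.1 ≠ 0 ∧ Q.2 ≠ 0 ∧ onConic F a b Q ∧
      joinedPts F P Q)) = X.image (fun x => (x, y x)) := by
    ext Q
    rw [Finset.mem_filter, Finset.mem_image]
    constructor
    · rintro ⟨-, h⟩
      obtain ⟨hx, h2'⟩ := (hmem Q).mp h
      exact ⟨Q.1, hx, by rw [← h2']⟩
    · rintro ⟨x, hx, rfl⟩
      exact ⟨Finset.mem_univ _, (hmem (x, y x)).mpr ⟨hx, rfl⟩⟩
  have hcard : (Finset.univ.filter (fun Q : F × F => Q.1 ≠ 0 ∧ Q.2 ≠ 0 ∧ onConic F a b Q ∧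
      joinedPts F P Q)).card = X.card := by
    rw [himg]
    exact Finset.card_image_of_injective _ (fun x x' h => congrArg Prod.fst h)
  rw [hcard]
  -- count the complement
  set B : Finset F := Finset.univ.filter (fun x => ¬ p x) with hBdef
  have hsum : X.card + B.card = q := by
    rw [hXdef, hBdef, Finset.card_filter_add_card_filter_not, Finset.card_univ, hq]
  have hsub : ({0, -b} : Finset F) ⊆ B := by
    intro x hx
    simp only [Finset.mem_insert, Finset.mem_singleton] at hx
    rw [hBdef, Finset.mem_filter]
    refine ⟨Finset.mem_univ _, ?_⟩
    rcases hx with rfl | rfl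
    · exact fun h => h.1 rfl
    · exact fun h => h.2.1 rfl
  have hT2 : ({0, -b} : Finset F).card = 2 :=
    Finset.card_pair (fun h => hb (by simpa [neg_eq_zero, eq_comm] using h))
  set E : Finset F := B \ {0, -b} with hEdef
  have hEB : E.card + 2 = B.card := by
    rw [hEdef, ← hT2]
    exact Finset.card_sdiff_add_card_eq_card hsub
  -- E ⊆ {P.1, c2, c3}
  set c2 : F := -P.2 * b / (a + P.2) with hc2
  set c3 : F := (-a * P.1 - b * P.2) / P.2 with hc3
  have hEsub : E ⊆ {P.1, c2, c3} := by
    intro x hx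
    rw [hEdef, Finset.mem_sdiff, hBdef, Finset.mem_filter] at hx
    obtain ⟨⟨-, hnp⟩, hnT⟩ := hx
    simp only [Finset.mem_insert, Finset.mem_singleton, not_or] at hnT
    obtain ⟨hx0, hxb'⟩ := hnT
    have hxb : x + b ≠ 0 := fun h => hxb' (by linear_combination h)
    simp only [Finset.mem_insert, Finset.mem_singleton]
    by_cases hxP : x = P.1
    · exact Or.inl hxP
    by_cases hyx : y x = P.2
    · -- y x = P.2
      have hc := hyx
      have heq : -a * x = P.2 * (x + b) := by
        rw [hy] at hc; field_simp at hc; linear_combination hc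
      have haP2 : a + P.2 ≠ 0 := by
        intro h
        have hP2a : P.2 = -a := by linear_combination h
        rw [hP2a] at heq
        exact hb ((mul_eq_zero.mp (by linear_combination -heq)).resolve_left
          (neg_ne_zero.mpr ha))
      refine Or.inr (Or.inl ?_)
      rw [hc2, eq_div_iff haP2]
      linear_combination -heq
    · -- P.1 * y x = P.2 * x
      have hc : P.1 * y x = P.2 * x := by
        by_contra hcc
        exact hnp ⟨hx0, hxb', hxP, hyx, hcc⟩
      have heq : P.1 * (-a * x) = P.2 * x * (x + b) := by
        rw [hy] at hc; field_simp at hc; linear_combination x * hc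
      have heq2 : -a * P.1 = P.2 * (x + b) := by
        have := mul_right_cancel₀ hx0 (by linear_combination heq :
          (-a * P.1) * x = (P.2 * (x + b)) * x)
        linear_combination this
      refine Or.inr (Or.inr ?_)
      rw [hc3, eq_div_iff hP2]
      linear_combination -heq2
  have hE3 : E.card ≤ 3 := by
    refine le_trans (Finset.card_le_card hEsub) ?_
    refine le_trans (Finset.card_insert_le _ _) ?_
    refine Nat.succ_le_succ (le_trans (Finset.card_insert_le _ _) ?_)
    simp
  -- E is nonempty
  have hE1 : 1 ≤ E.card := by
    rw [Nat.one_le_iff_ne_zero, ← Nat.pos_iff_ne_zero, Finset.card_pos]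
    have memE : ∀ w : F, w ≠ 0 → w ≠ -b → ¬ p w → w ∈ E := by
      intro w hw0 hwb hnp
      rw [hEdef, Finset.mem_sdiff, hBdef, Finset.mem_filter]
      exact ⟨⟨Finset.mem_univ _, hnp⟩, by simp [hw0, hwb]⟩
    by_cases hb1 : P.1 = -b
    · by_cases ha2 : P.2 = -a
      · -- witness -2*b with the slope condition
        refine ⟨-2 * b, memE _ ?_ ?_ ?_⟩
        · exact fun h => (mul_ne_zero (neg_ne_zero.mpr h2) hb) h
        · intro h; exact hb (by linear_combination -h)
        · intro hpw
          apply hpw.2.2.2.2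
          have hden : -2 * b + b ≠ 0 := by
            intro h; exact hb (by linear_combination -h)
          have hcomp : y (-2 * b) = -2 * a := by
            simp only [hy]
            rw [div_eq_iff hden]; ring
          rw [hcomp, hb1, ha2]; ring
      · -- witness c2 with y c2 = P.2
        have haP2 : a + P.2 ≠ 0 := fun h => ha2 (by linear_combination h)
        have hc20 : c2 ≠ 0 := by
          rw [hc2]
          exact div_ne_zero (by simpa [neg_eq_zero] using mul_ne_zero hP2 hb) haP2
        have hc2b : c2 ≠ -b := by
          rw [hc2]
          intro h
          rw [div_eq_iff haP2] at h
          exact ha ((mul_eq_zero.mp (by linear_combination -h : -b * a = 0)).resolve_left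
            (neg_ne_zero.mpr hb))
        refine ⟨c2, memE _ hc20 hc2b ?_⟩
        intro hpw
        apply hpw.2.2.2.1
        have hden : c2 + b ≠ 0 := fun h => hc2b (by linear_combination h)
        rw [hy]
        rw [div_eq_iff hden]
        have : c2 * (a + P.2) = -P.2 * b := by
          rw [hc2, div_mul_cancel₀ _ haP2]
        linear_combination -this
    · refine ⟨P.1, memE _ hP1 hb1 ?_⟩
      exact fun hpw => hpw.2.2.1 rfl
  simp only [Set.mem_insert_iff, Set.mem_singleton_iff]
  omega
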